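/- Let a, b > 0, let g : (0,a] × [0,b] → [0,∞) be a uniqueness bound, let t₀ ∈ ℝ, x₀ ∈ ℝⁿ, and let ‖·‖ be a norm on ℝⁿ. Suppose f : V = [t₀−a, t₀+a] × B̄(x₀,b) → ℝⁿ is continuous, ‖f(t,x)‖ ≤ g(|t−t₀|, ‖x−x₀‖) for all (t,x) ∈ V with t ≠ t₀, and f(t, x₀) = 0 for all t ∈ [t₀−a, t₀+a]. Then the initial value problem x' = f(t,x), x(t₀) = x₀ has only the constant solution x ≡ x₀ on any subinterval I ⊂ [t₀−a, t₀+a] containing t₀. -/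

import Mathlib

open MeasureTheory Set Filter Topology

/-- A function `g : (0,a] × [0,b] → [0,∞)` is a *uniqueness bound* (Definition 1)
if for every `a' ∈ (0,a]` the only Lipschitz continuous function
`φ : [0,a'] → [0,∞)` (taking values in the domain `[0,b]` of `g`) satisfying
`φ'(t) ≤ g(t,φ(t))` for almost all `t ∈ (0,a']`, `φ(0) = 0` and `φ'(0) = 0`,
is `φ ≡ 0` on `[0,a']`. -/
def IsUniquenessBound (a b : ℝ) (g : ℝ → ℝ → ℝ) : Prop :=
  ∀ a' ∈ Set.Ioc (0:ℝ) a, ∀ φ : ℝ → ℝ,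
    (∃ K, LipschitzOnWith K φ (Set.Icc 0 a')) →
    (∀ t ∈ Set.Icc (0:ℝ) a', φ t ∈ Set.Icc (0:ℝ) b) →
    φ 0 = 0 →
    HasDerivWithinAt φ 0 (Set.Ici 0) 0 →
    (∀ᵐ t ∂volume, t ∈ Set.Ioc (0:ℝ) a' → ∀ y, HasDerivAt φ y t → y ≤ g t (φ t)) →
    ∀ t ∈ Set.Icc (0:ℝ) a', φ t = 0

lemma aux_right
    {E : Type*} [NormedAddCommGroup E] [NormedSpace ℝ E]
    (a b : ℝ) (ha : 0 < a)
    (g : ℝ → ℝ → ℝ)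
    (hg : IsUniquenessBound a b g)
    (t₀ : ℝ) (x₀ : E) (f : ℝ → E → E)
    (hf : ContinuousOn (fun p : ℝ × E => f p.1 p.2)
      (Set.Icc (t₀ - a) (t₀ + a) ×ˢ Metric.closedBall x₀ b))
    (hbound : ∀ t ∈ Set.Icc (t₀ - a) (t₀ + a), ∀ x ∈ Metric.closedBall x₀ b,
      t ≠ t₀ → ‖f t x‖ ≤ g |t - t₀| ‖x - x₀‖)
    (hf0 : ∀ t ∈ Set.Icc (t₀ - a) (t₀ + a), f t x₀ = 0) :
    ∀ t₂ : ℝ, t₀ ≤ t₂ → t₂ ≤ t₀ + a →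
      ∀ x : ℝ → E,
        (∀ t ∈ Set.Icc t₀ t₂, x t ∈ Metric.closedBall x₀ b) →
        x t₀ = x₀ →
        (∀ t ∈ Set.Icc t₀ t₂, HasDerivWithinAt x (f t (x t)) (Set.Icc t₀ t₂) t) →
        ∀ t ∈ Set.Icc t₀ t₂, x t = x₀ := by
  intro t₂ ht₀₂ ht₂ x hball hx0 hx' t ht
  rcases eq_or_lt_of_le ht₀₂ with heq | hlt
  · have : t = t₀ := le_antisymm (heq ▸ ht.2) ht.1
    rw [this, hx0]
  set a' : ℝ := t₂ - t₀ with ha'def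
  have ha' : 0 < a' := sub_pos.mpr hlt
  have ha'a : a' ≤ a := by simp only [ha'def]; linarith
  set φ : ℝ → ℝ := fun s => ‖x (t₀ + s) - x₀‖ with hφdef
  have hmemIcc : ∀ s ∈ Set.Icc (0:ℝ) a', t₀ + s ∈ Set.Icc t₀ t₂ := by
    intro s hs
    exact ⟨by linarith [hs.1], by simp only [ha'def] at hs; linarith [hs.2]⟩
  have hsub : Set.Icc t₀ t₂ ⊆ Set.Icc (t₀ - a) (t₀ + a) := by
    intro u hu; exact ⟨by linarith [hu.1], by linarith [hu.2]⟩
  have hxc : ContinuousOn x (Set.Icc t₀ t₂) := fun u hu => (hx' u hu).continuousWithinAt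
  have hfc : ContinuousOn (fun u => f u (x u)) (Set.Icc t₀ t₂) := by
    apply hf.comp (continuousOn_id.prodMk hxc)
    intro u hu
    exact ⟨hsub hu, hball u hu⟩
  obtain ⟨C, hC⟩ := isCompact_Icc.exists_bound_of_continuousOn hfc
  have hlipx : LipschitzOnWith (Real.toNNReal C) x (Set.Icc t₀ t₂) := by
    apply (convex_Icc _ _).lipschitzOnWith_of_nnnorm_hasDerivWithin_le hx'
    intro u hu
    rw [← NNReal.coe_le_coe, coe_nnnorm]
    exact (hC u hu).trans (Real.le_coe_toNNReal C)
  have hedist : ∀ s u : ℝ, edist (t₀ + s) (t₀ + u) = edist s u := by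
    intro s u
    simp [edist_dist, Real.dist_eq, add_sub_add_left_eq_sub]
  have hlip : ∃ K', LipschitzOnWith K' φ (Set.Icc 0 a') := by
    refine ⟨Real.toNNReal C, ?_⟩
    intro s hs u hu
    have h2 := hlipx (hmemIcc s hs) (hmemIcc u hu)
    rw [hedist s u] at h2
    refine le_trans ?_ h2
    simp only [hφdef, edist_dist, Real.dist_eq, dist_eq_norm]
    rw [ENNReal.ofReal_le_ofReal_iff (norm_nonneg _)]
    have := abs_norm_sub_norm_le (x (t₀ + s) - x₀) (x (t₀ + u) - x₀)
    rw [sub_sub_sub_cancel_right] at this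
    exact this
  have hmem : ∀ s ∈ Set.Icc (0:ℝ) a', φ s ∈ Set.Icc (0:ℝ) b := by
    intro s hs
    refine ⟨norm_nonneg _, ?_⟩
    have := hball _ (hmemIcc s hs)
    rwa [Metric.mem_closedBall, dist_eq_norm] at this
  have hφ0 : φ 0 = 0 := by simp [hφdef, hx0]
  -- derivative 0 at 0
  have hd0 : HasDerivWithinAt x 0 (Set.Icc t₀ t₂) t₀ := by
    have h := hx' t₀ ⟨le_refl _, ht₀₂⟩
    rwa [hx0, hf0 t₀ ⟨by linarith, by linarith⟩] at h
  have hO : (fun u => x u - x t₀) =o[𝓝[Set.Icc t₀ t₂] t₀] fun u => u - t₀ := by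
    have := hasDerivWithinAt_iff_isLittleO.mp hd0
    simpa using this
  have htend : Tendsto (fun s : ℝ => t₀ + s) (𝓝[Set.Icc 0 a'] 0) (𝓝[Set.Icc t₀ t₂] t₀) := by
    apply tendsto_nhdsWithin_of_tendsto_nhds_of_eventually_within
    · have : Tendsto (fun s : ℝ => t₀ + s) (𝓝 0) (𝓝 (t₀ + 0)) :=
        (continuous_const.add continuous_id).tendsto 0
      simpa using this.mono_left nhdsWithin_le_nhds
    · exact eventually_mem_nhdsWithin.mono hmemIcc
  have hφ'0 : HasDerivWithinAt φ 0 (Set.Ici 0) 0 := by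
    rw [hasDerivWithinAt_iff_isLittleO]
    have hOφ : (fun s => φ s) =o[𝓝[Set.Icc 0 a'] 0] fun s : ℝ => s := by
      have h := (hO.comp_tendsto htend).norm_left
      simpa [hφdef, hx0, Function.comp_def, add_sub_cancel_left] using h
    have heqf : 𝓝[Set.Icc (0:ℝ) a'] (0:ℝ) = 𝓝[Set.Ici 0] 0 :=
      nhdsWithin_Icc_eq_nhdsGE ha'
    rw [← heqf]
    simpa [hφ0] using hOφ
  -- a.e. bound
  have hkey : ∀ s ∈ Set.Ioo (0:ℝ) a', ∀ y, HasDerivAt φ y s → y ≤ g s (φ s) := by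
    intro s hs y hy
    have hu : t₀ + s ∈ Set.Ioo t₀ t₂ := ⟨by linarith [hs.1], by simp only [ha'def] at hs; linarith [hs.2]⟩
    have hder : HasDerivAt x (f (t₀ + s) (x (t₀ + s))) (t₀ + s) :=
      (hx' _ (Set.Ioo_subset_Icc_self hu)).hasDerivAt (Icc_mem_nhds hu.1 hu.2)
    set xs : ℝ → E := fun r => x (t₀ + r) with hxsdef
    have hxs : HasDerivAt xs (f (t₀ + s) (x (t₀ + s))) s := by
      have h2 : HasDerivAt (fun r : ℝ => t₀ + r) 1 s := (hasDerivAt_id s).const_add t₀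
      simpa [hxsdef, Function.comp_def] using HasDerivAt.scomp s hder h2
    have hne : (𝓝[>] s).NeBot := nhdsGT_neBot s
    have hmono : 𝓝[>] s ≤ 𝓝[≠] s := nhdsWithin_mono _ (fun r hr => ne_of_gt hr)
    have hslope_x : Tendsto (fun r => ‖slope xs s r‖) (𝓝[>] s)
        (𝓝 ‖f (t₀ + s) (x (t₀ + s))‖) :=
      (((hasDerivAt_iff_tendsto_slope.mp hxs).mono_left hmono)).norm
    have hslope_φ : Tendsto (slope φ s) (𝓝[>] s) (𝓝 y) :=
      (hasDerivAt_iff_tendsto_slope.mp hy).mono_left hmono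
    have hle : y ≤ ‖f (t₀ + s) (x (t₀ + s))‖ := by
      refine le_of_tendsto_of_tendsto hslope_φ hslope_x ?_
      refine eventually_mem_nhdsWithin.mono ?_
      intro r hr
      have hrs : (0:ℝ) < r - s := sub_pos.mpr hr
      have hnum : φ r - φ s ≤ ‖x (t₀ + r) - x (t₀ + s)‖ := by
        have := norm_sub_norm_le (x (t₀ + r) - x₀) (x (t₀ + s) - x₀)
        simpa [hφdef, sub_sub_sub_cancel_right] using this
      show slope φ s r ≤ ‖slope xs s r‖
      rw [slope_def_field, hxsdef, slope_def_module, norm_smul, norm_inv,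
        Real.norm_eq_abs, abs_of_pos hrs, div_eq_inv_mul]
      exact mul_le_mul_of_nonneg_left hnum (inv_nonneg.mpr hrs.le)
    refine hle.trans ?_
    have hb1 := hbound (t₀ + s) (hsub (Set.Ioo_subset_Icc_self hu)) (x (t₀ + s))
      (hball _ (Set.Ioo_subset_Icc_self hu)) (by intro h; nlinarith [hs.1, congrArg (· - t₀) h])
    have habs : |t₀ + s - t₀| = s := by rw [add_sub_cancel_left, abs_of_pos hs.1]
    rw [habs] at hb1
    exact hb1
  have hae : ∀ᵐ s ∂volume, s ∈ Set.Ioc (0:ℝ) a' → ∀ y, HasDerivAt φ y s → y ≤ g s (φ s) := by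
    rw [MeasureTheory.ae_iff]
    refine measure_mono_null ?_ (Real.volume_singleton (a := a'))
    intro s hsbad
    simp only [Set.mem_setOf_eq, not_forall] at hsbad
    obtain ⟨hsIoc, y, hy, hgt⟩ := hsbad
    by_contra hne
    simp only [Set.mem_singleton_iff] at hne
    exact hgt (hkey s ⟨hsIoc.1, lt_of_le_of_ne hsIoc.2 hne⟩ y hy)
  have hres := hg a' ⟨ha', ha'a⟩ φ hlip hmem hφ0 hφ'0 hae (t - t₀)
    ⟨by linarith [ht.1], by simp only [ha'def]; linarith [ht.2]⟩
  have : ‖x (t₀ + (t - t₀)) - x₀‖ = 0 := hres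
  rw [add_sub_cancel] at this
  exact sub_eq_zero.mp (norm_eq_zero.mp this)

/-- Proposition 1(1): if `‖f(t,x)‖ ≤ g(|t-t₀|, ‖x-x₀‖)` for a uniqueness bound `g`
and `f(t,x₀) = 0`, then the IVP `x' = f(t,x)`, `x(t₀) = x₀` has only the constant
solution `x ≡ x₀` on any subinterval `I ⊂ [t₀-a, t₀+a]` containing `t₀`. -/
theorem only_constant_solution_of_uniquenessBound
    {E : Type*} [NormedAddCommGroup E] [NormedSpace ℝ E] [FiniteDimensional ℝ E]
    (a b : ℝ) (ha : 0 < a) (hb : 0 < b)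
    (g : ℝ → ℝ → ℝ)
    (hg0 : ∀ t ∈ Set.Ioc (0:ℝ) a, ∀ x ∈ Set.Icc (0:ℝ) b, 0 ≤ g t x)
    (hg : IsUniquenessBound a b g)
    (t₀ : ℝ) (x₀ : E) (f : ℝ → E → E)
    (hf : ContinuousOn (fun p : ℝ × E => f p.1 p.2)
      (Set.Icc (t₀ - a) (t₀ + a) ×ˢ Metric.closedBall x₀ b))
    (hbound : ∀ t ∈ Set.Icc (t₀ - a) (t₀ + a), ∀ x ∈ Metric.closedBall x₀ b,
      t ≠ t₀ → ‖f t x‖ ≤ g |t - t₀| ‖x - x₀‖)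
    (hf0 : ∀ t ∈ Set.Icc (t₀ - a) (t₀ + a), f t x₀ = 0) :
    ∀ t₁ t₂ : ℝ, t₀ - a ≤ t₁ → t₁ ≤ t₀ → t₀ ≤ t₂ → t₂ ≤ t₀ + a →
      ∀ x : ℝ → E,
        (∀ t ∈ Set.Icc t₁ t₂, x t ∈ Metric.closedBall x₀ b) →
        x t₀ = x₀ →
        (∀ t ∈ Set.Icc t₁ t₂, HasDerivWithinAt x (f t (x t)) (Set.Icc t₁ t₂) t) →
        ∀ t ∈ Set.Icc t₁ t₂, x t = x₀ := by
  intro t₁ t₂ ht₁ ht₁₀ ht₀₂ ht₂ x hball hx0 hx' t ht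
  rcases le_or_gt t₀ t with hc | hc
  · -- right side
    refine aux_right a b ha g hg t₀ x₀ f hf hbound hf0 t₂ ht₀₂ ht₂ x ?_ hx0 ?_ t ⟨hc, ht.2⟩
    · intro u hu; exact hball u ⟨ht₁₀.trans hu.1, hu.2⟩
    · intro u hu
      exact (hx' u ⟨ht₁₀.trans hu.1, hu.2⟩).mono (Set.Icc_subset_Icc ht₁₀ le_rfl)
  · -- left side : reflect
    set F : ℝ → E → E := fun s y => - f (2*t₀ - s) y with hFdef
    have hrefl : ∀ s ∈ Set.Icc (t₀ - a) (t₀ + a), 2*t₀ - s ∈ Set.Icc (t₀ - a) (t₀ + a) := by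
      intro s hs; exact ⟨by linarith [hs.2], by linarith [hs.1]⟩
    have hF : ContinuousOn (fun p : ℝ × E => F p.1 p.2)
        (Set.Icc (t₀ - a) (t₀ + a) ×ˢ Metric.closedBall x₀ b) := by
      have hc2 : ContinuousOn (fun p : ℝ × E => (2*t₀ - p.1, p.2))
          (Set.Icc (t₀ - a) (t₀ + a) ×ˢ Metric.closedBall x₀ b) :=
        ((continuous_const.sub continuous_fst).prodMk continuous_snd).continuousOn
      have hmap : Set.MapsTo (fun p : ℝ × E => (2*t₀ - p.1, p.2))
          (Set.Icc (t₀ - a) (t₀ + a) ×ˢ Metric.closedBall x₀ b)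
          (Set.Icc (t₀ - a) (t₀ + a) ×ˢ Metric.closedBall x₀ b) := by
        intro p hp; exact ⟨hrefl p.1 hp.1, hp.2⟩
      exact (hf.comp hc2 hmap).neg
    have hFbound : ∀ s ∈ Set.Icc (t₀ - a) (t₀ + a), ∀ y ∈ Metric.closedBall x₀ b,
        s ≠ t₀ → ‖F s y‖ ≤ g |s - t₀| ‖y - x₀‖ := by
      intro s hs y hy hne
      have h1 := hbound (2*t₀ - s) (hrefl s hs) y hy (by intro h; apply hne; linarith)
      have h2 : |2*t₀ - s - t₀| = |s - t₀| := by
        rw [show 2*t₀ - s - t₀ = -(s - t₀) by ring, abs_neg]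
      rw [h2] at h1
      simpa [hFdef] using h1
    have hF0 : ∀ s ∈ Set.Icc (t₀ - a) (t₀ + a), F s x₀ = 0 := by
      intro s hs; simp [hFdef, hf0 _ (hrefl s hs)]
    set y : ℝ → E := fun s => x (2*t₀ - s) with hydef
    have hmem2 : ∀ s ∈ Set.Icc t₀ (2*t₀ - t₁), 2*t₀ - s ∈ Set.Icc t₁ t₂ := by
      intro s hs; exact ⟨by linarith [hs.2], by linarith [hs.1]⟩
    have hy := aux_right a b ha g hg t₀ x₀ F hF hFbound hF0 (2*t₀ - t₁)
      (by linarith) (by linarith) y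
      (fun s hs => hball _ (hmem2 s hs))
      (by simp [hydef, show 2*t₀ - t₀ = t₀ by ring, hx0])
      ?_ (2*t₀ - t) ⟨by linarith, by linarith [ht.1]⟩
    · simpa [hydef, show 2*t₀ - (2*t₀ - t) = t by ring] using hy
    · intro s hs
      have hd := (hx' (2*t₀ - s) (hmem2 s hs))
      have hneg : HasDerivWithinAt (fun r : ℝ => 2*t₀ - r) (-1) (Set.Icc t₀ (2*t₀ - t₁)) s :=
        ((hasDerivWithinAt_id s _).const_sub (2*t₀))
      have := HasDerivWithinAt.scomp s hd hneg (fun r hr => hmem2 r hr)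
      simpa [hydef, hFdef, Function.comp_def] using this
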